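/- Let G be a finite connected K_{1,1,3}-free partial 2-tree. Then there exists a finite K_{1,1,3}-free series-parallel graph G* that contains G as an induced subgraph; consequently, if G* admits a proper square-contact representation then so does G. -/

import Mathlib

open Set

structure AxSquare where
  x : ℝ
  y : ℝ
  side : ℝ
  side_pos : 0 < side

namespace AxSquare
def left (S : AxSquare) : ℝ := S.x
def right (S : AxSquare) : ℝ := S.x + S.side
def bottom (S : AxSquare) : ℝ := S.y
def top (S : AxSquare) : ℝ := S.y + S.side
/-- The square as a subset of the plane. -/
def toSet (S : AxSquare) : Set (ℝ × ℝ) :=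
  Set.Icc S.x (S.x + S.side) ×ˢ Set.Icc S.y (S.y + S.side)
end AxSquare

/-- A proper square-contact representation of `G`, restricted to the vertex set `A`. -/
def IsSCROn {V : Type} (G : SimpleGraph V) (A : Set V) (Sq : V → AxSquare) : Prop :=
  (∀ u ∈ A, ∀ v ∈ A, u ≠ v → interior (Sq u).toSet ∩ interior (Sq v).toSet = ∅) ∧
  (∀ u ∈ A, ∀ v ∈ A, G.Adj u v → ((Sq u).toSet ∩ (Sq v).toSet).Infinite) ∧
  (∀ u ∈ A, ∀ v ∈ A, u ≠ v → ¬ G.Adj u v → (Sq u).toSet ∩ (Sq v).toSet = ∅)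

/-- `G` admits a proper square-contact representation. -/
def HasSCR {V : Type} (G : SimpleGraph V) : Prop :=
  ∃ Sq : V → AxSquare, IsSCROn G Set.univ Sq

/-! ### `K_{1,1,3}` and `K_{1,1,3}`-freeness -/

/-- The complete tripartite graph `K_{1,1,3}`: vertices `0, 1` are the two adjacent
vertices, and `2, 3, 4` are pairwise non-adjacent, each adjacent to `0` and `1`. -/
def K113 : SimpleGraph (Fin 5) where
  Adj u v := u ≠ v ∧ ((u : ℕ) < 2 ∨ (v : ℕ) < 2)
  symm := ⟨fun u v h => ⟨h.1.symm, h.2.symm⟩⟩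
  loopless := ⟨fun u h => h.1 rfl⟩

/-- `G` contains no subgraph isomorphic to `K_{1,1,3}`. -/
def K113Free {V : Type} (G : SimpleGraph V) : Prop :=
  ¬ ∃ f : Fin 5 → V, Function.Injective f ∧ ∀ u v, K113.Adj u v → G.Adj (f u) (f v)

/-! ### 2-trees, partial 2-trees, series-parallel graphs -/

/-- `G` is a 2-tree: it can be built from a single edge by repeatedly adding a new
vertex adjacent to exactly the two endpoints of an already existing edge. -/
def IsTwoTree {V : Type} (G : SimpleGraph V) : Prop :=
  ∃ (n : ℕ) (e : Fin n ≃ V), 2 ≤ n ∧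
    (∀ i j : Fin n, (i : ℕ) = 0 → (j : ℕ) = 1 → G.Adj (e i) (e j)) ∧
    (∀ j : Fin n, 2 ≤ (j : ℕ) →
      ∃ a b : Fin n, (a : ℕ) < (j : ℕ) ∧ (b : ℕ) < (j : ℕ) ∧ G.Adj (e a) (e b) ∧
        ∀ i : Fin n, (i : ℕ) < (j : ℕ) → (G.Adj (e i) (e j) ↔ i = a ∨ i = b))

/-- `G` is a partial 2-tree: a subgraph of some 2-tree. -/
def IsPartialTwoTree {V : Type} (G : SimpleGraph V) : Prop :=
  ∃ (m : ℕ) (H : SimpleGraph (Fin m)), IsTwoTree H ∧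
    ∃ f : V → Fin m, Function.Injective f ∧ ∀ u v, G.Adj u v → H.Adj (f u) (f v)

/-- `G` is 2-connected (biconnected): it has at least two vertices, is connected, and
  removing any single vertex leaves it connected. -/
def TwoConnected {V : Type} [Fintype V] (G : SimpleGraph V) : Prop :=
  2 ≤ Fintype.card V ∧ G.Connected ∧
    ∀ v : V, (G.induce {u : V | u ≠ v}).Connected

/-- A series-parallel graph is a 2-connected partial 2-tree. -/
def IsSeriesParallel {V : Type} [Fintype V] (G : SimpleGraph V) : Prop :=
  TwoConnected G ∧ IsPartialTwoTree G

open SimpleGraph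
section Aux
variable {V : Type} {m0 : ℕ}
abbrev WT (m0 : ℕ) := Fin m0 ⊕ ((Fin m0 × Fin m0) ⊕ (Fin m0 × Fin m0))
variable (G : SimpleGraph V) (H : SimpleGraph (Fin m0)) (f0 : V → Fin m0) (v0 v1 : Fin m0)

open scoped Classical in
noncomputable def anchor (p : Fin m0 × Fin m0) : Fin m0 × Fin m0 :=
  if H.Adj p.1 p.2 then p else (v0, v1)

lemma anchor_adj (h01 : H.Adj v0 v1) (p : Fin m0 × Fin m0) :
    H.Adj (anchor H v0 v1 p).1 (anchor H v0 v1 p).2 := by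
  unfold anchor; split
  · assumption
  · exact h01

lemma anchor_of_adj {p : Fin m0 × Fin m0} (h : H.Adj p.1 p.2) : anchor H v0 v1 p = p := by
  unfold anchor; split
  · rfl
  · exact absurd h (by assumption)

def gsAdj : WT m0 → WT m0 → Prop
  | .inl a, .inl b => ((∃ u v, G.Adj u v ∧ f0 u = a ∧ f0 v = b) ∧ a ≠ b)
  | .inl a, .inr (.inl p) => a = (anchor H v0 v1 p).1
  | .inl a, .inr (.inr p) => a = (anchor H v0 v1 p).2
  | .inr (.inl p), .inl a => a = (anchor H v0 v1 p).1
  | .inr (.inr p), .inl a => a = (anchor H v0 v1 p).2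
  | .inr (.inl p), .inr (.inr q) => p = q
  | .inr (.inr p), .inr (.inl q) => p = q
  | .inr (.inl _), .inr (.inl _) => False
  | .inr (.inr _), .inr (.inr _) => False

noncomputable def GstarW : SimpleGraph (WT m0) where
  Adj := gsAdj G H f0 v0 v1
  symm := by
    constructor
    rintro (a | p | p) (b | q | q) h
    · exact ⟨⟨h.1.choose_spec.choose, h.1.choose, h.1.choose_spec.choose_spec.1.symm,
        h.1.choose_spec.choose_spec.2.2, h.1.choose_spec.choose_spec.2.1⟩, h.2.symm⟩
    all_goals first
      | exact h
      | exact h.symm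
  loopless := by
    constructor
    rintro (a | p | p) h
    · exact h.2 rfl
    · exact h
    · exact h

lemma reachable_of_eq {α : Type} {Γ : SimpleGraph α} {a b : α} (h : a = b) :
    Γ.Reachable a b := h ▸ SimpleGraph.Reachable.refl a

section Reach
variable {x : WT m0}

lemma reach_lift_direct (hne : v0 ≠ v1) {c d : Fin m0} (hcd : H.Adj c d)
    (hc : (Sum.inl c : WT m0) ≠ x) (hd : (Sum.inl d : WT m0) ≠ x)
    (hs : (Sum.inr (Sum.inl (c, d)) : WT m0) ≠ x)
    (ht : (Sum.inr (Sum.inr (c, d)) : WT m0) ≠ x) :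
    ((GstarW G H f0 v0 v1).induce {u | u ≠ x}).Reachable ⟨Sum.inl c, hc⟩ ⟨Sum.inl d, hd⟩ := by
  have ha : anchor H v0 v1 (c, d) = (c, d) := anchor_of_adj H v0 v1 hcd
  have s1 : ((GstarW G H f0 v0 v1).induce {u | u ≠ x}).Adj ⟨Sum.inl c, hc⟩ ⟨Sum.inr (Sum.inl (c, d)), hs⟩ := by
    show c = (anchor H v0 v1 (c, d)).1
    rw [ha]
  have s2 : ((GstarW G H f0 v0 v1).induce {u | u ≠ x}).Adj ⟨Sum.inr (Sum.inl (c, d)), hs⟩ ⟨Sum.inr (Sum.inr (c, d)), ht⟩ := by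
    show (c, d) = (c, d); rfl
  have s3 : ((GstarW G H f0 v0 v1).induce {u | u ≠ x}).Adj ⟨Sum.inr (Sum.inr (c, d)), ht⟩ ⟨Sum.inl d, hd⟩ := by
    show d = (anchor H v0 v1 (c, d)).2
    rw [ha]
  exact (s1.reachable.trans s2.reachable).trans s3.reachable

lemma reach_lift (hne : v0 ≠ v1) {c d : Fin m0} (hcd : H.Adj c d)
    (hc : (Sum.inl c : WT m0) ≠ x) (hd : (Sum.inl d : WT m0) ≠ x) :
    ((GstarW G H f0 v0 v1).induce {u | u ≠ x}).Reachable ⟨Sum.inl c, hc⟩ ⟨Sum.inl d, hd⟩ := by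
  have hcd' : c ≠ d := hcd.ne
  by_cases hs : (Sum.inr (Sum.inl (c, d)) : WT m0) = x
  · -- use the (d,c) path
    refine (reach_lift_direct G H f0 v0 v1 hne hcd.symm hd hc ?_ ?_).symm
    · rw [← hs]; intro hh
      simp only [Sum.inr.injEq, Sum.inl.injEq, Prod.mk.injEq] at hh
      exact hcd' hh.2
    · rw [← hs]; simp
  · by_cases ht : (Sum.inr (Sum.inr (c, d)) : WT m0) = x
    · refine (reach_lift_direct G H f0 v0 v1 hne hcd.symm hd hc ?_ ?_).symm
      · rw [← ht]; simp
      · rw [← ht]; intro hh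
        simp only [Sum.inr.injEq, Sum.inl.injEq, Prod.mk.injEq] at hh
        exact hcd' hh.1.symm
    · exact reach_lift_direct G H f0 v0 v1 hne hcd hc hd hs ht

noncomputable def target (hne : v0 ≠ v1) (x : WT m0) : {u : WT m0 | u ≠ x} :=
  if h0 : (Sum.inl v0 : WT m0) ≠ x then ⟨Sum.inl v0, h0⟩
  else ⟨Sum.inl v1, by
    intro hh
    exact hne (Sum.inl_injective (hh.trans (not_not.mp h0).symm)).symm⟩

variable {n : ℕ} (eH : Fin n ≃ Fin m0)

lemma reach_old (hne : v0 ≠ v1) (h01 : H.Adj v0 v1) (hn : 2 ≤ n)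
    (hv0 : eH ⟨0, by omega⟩ = v0) (hv1 : eH ⟨1, by omega⟩ = v1)
    (hstep : ∀ j : Fin n, 2 ≤ (j : ℕ) →
      ∃ a b : Fin n, (a : ℕ) < (j : ℕ) ∧ (b : ℕ) < (j : ℕ) ∧ H.Adj (eH a) (eH b) ∧
        ∀ i : Fin n, (i : ℕ) < (j : ℕ) → (H.Adj (eH i) (eH j) ↔ i = a ∨ i = b))
    (x : WT m0) :
    ∀ k : ℕ, ∀ (hk : k < n) (h : (Sum.inl (eH ⟨k, hk⟩) : WT m0) ≠ x),
      ((GstarW G H f0 v0 v1).induce {u | u ≠ x}).Reachable ⟨Sum.inl (eH ⟨k, hk⟩), h⟩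
        (target v0 v1 hne x) := by
  intro k
  induction k using Nat.strong_induction_on with
  | _ k IH =>
    intro hk h
    rcases Nat.lt_or_ge k 2 with h2 | h2
    · interval_cases k
      · -- k = 0 : this vertex is v0
        have hx0 : (Sum.inl v0 : WT m0) ≠ x := by rw [← hv0]; exact h
        have ht : target v0 v1 hne x = ⟨Sum.inl v0, hx0⟩ := by
          unfold target; rw [dif_pos hx0]
        rw [ht]
        exact reachable_of_eq (Subtype.ext (by simp [← hv0]))
      · -- k = 1 : this vertex is v1
        have hx1 : (Sum.inl v1 : WT m0) ≠ x := by rw [← hv1]; exact h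
        by_cases hx0 : (Sum.inl v0 : WT m0) ≠ x
        · have ht : target v0 v1 hne x = ⟨Sum.inl v0, hx0⟩ := by
            unfold target; rw [dif_pos hx0]
          rw [ht]
          have := (reach_lift G H f0 v0 v1 hne h01 hx0 hx1).symm
          exact reachable_of_eq (Subtype.ext (by simp [← hv1])) |>.trans this
        · have ht : target v0 v1 hne x = ⟨Sum.inl v1, hx1⟩ := by
            unfold target; rw [dif_neg hx0]
          rw [ht]
          exact reachable_of_eq (Subtype.ext (by simp [← hv1]))
    · obtain ⟨a, b, ha, hb, hab, hiff⟩ := hstep ⟨k, hk⟩ h2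
      have haj : H.Adj (eH a) (eH ⟨k, hk⟩) := (hiff a ha).mpr (Or.inl rfl)
      have hbj : H.Adj (eH b) (eH ⟨k, hk⟩) := (hiff b hb).mpr (Or.inr rfl)
      have hne_ab : eH a ≠ eH b := hab.ne
      by_cases hxa : (Sum.inl (eH a) : WT m0) ≠ x
      · have r1 := (reach_lift G H f0 v0 v1 hne haj hxa h).symm
        have r2 := IH a.1 ha a.isLt (by simpa using hxa)
        exact r1.trans (reachable_of_eq (Subtype.ext (by simp)) |>.trans r2)
      · have hxa' : (Sum.inl (eH a) : WT m0) = x := not_not.mp hxa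
        have hxb : (Sum.inl (eH b) : WT m0) ≠ x := by
          rw [← hxa']
          intro hh
          exact hne_ab (Sum.inl_injective hh).symm
        have r1 := (reach_lift G H f0 v0 v1 hne hbj hxb h).symm
        have r2 := IH b.1 hb b.isLt (by simpa using hxb)
        exact r1.trans (reachable_of_eq (Subtype.ext (by simp)) |>.trans r2)

lemma reach_old' (hne : v0 ≠ v1) (h01 : H.Adj v0 v1) (hn : 2 ≤ n)
    (hv0 : eH ⟨0, by omega⟩ = v0) (hv1 : eH ⟨1, by omega⟩ = v1)
    (hstep : ∀ j : Fin n, 2 ≤ (j : ℕ) →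
      ∃ a b : Fin n, (a : ℕ) < (j : ℕ) ∧ (b : ℕ) < (j : ℕ) ∧ H.Adj (eH a) (eH b) ∧
        ∀ i : Fin n, (i : ℕ) < (j : ℕ) → (H.Adj (eH i) (eH j) ↔ i = a ∨ i = b))
    (x : WT m0) (w : Fin m0) (h : (Sum.inl w : WT m0) ≠ x) :
    ((GstarW G H f0 v0 v1).induce {u | u ≠ x}).Reachable ⟨Sum.inl w, h⟩
      (target v0 v1 hne x) := by
  have e1 : eH ⟨((eH.symm w : Fin n) : ℕ), (eH.symm w).isLt⟩ = w := by
    simp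
  have h' : (Sum.inl (eH ⟨((eH.symm w : Fin n) : ℕ), (eH.symm w).isLt⟩) : WT m0) ≠ x := by
    rw [e1]; exact h
  refine (reachable_of_eq (Subtype.ext ?_)).trans
    (reach_old G H f0 v0 v1 eH hne h01 hn hv0 hv1 hstep x _ _ h')
  exact congrArg Sum.inl e1.symm

lemma reach_new (hne : v0 ≠ v1) (h01 : H.Adj v0 v1) (hn : 2 ≤ n)
    (hv0 : eH ⟨0, by omega⟩ = v0) (hv1 : eH ⟨1, by omega⟩ = v1)
    (hstep : ∀ j : Fin n, 2 ≤ (j : ℕ) →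
      ∃ a b : Fin n, (a : ℕ) < (j : ℕ) ∧ (b : ℕ) < (j : ℕ) ∧ H.Adj (eH a) (eH b) ∧
        ∀ i : Fin n, (i : ℕ) < (j : ℕ) → (H.Adj (eH i) (eH j) ↔ i = a ∨ i = b))
    (x : WT m0) (z : (Fin m0 × Fin m0) ⊕ (Fin m0 × Fin m0))
    (h : (Sum.inr z : WT m0) ≠ x) :
    ((GstarW G H f0 v0 v1).induce {u | u ≠ x}).Reachable ⟨Sum.inr z, h⟩
      (target v0 v1 hne x) := by
  have hRO := reach_old' G H f0 v0 v1 eH hne h01 hn hv0 hv1 hstep x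
  rcases z with p | p
  · -- s-vertex : adjacent to (anchor p).1 and to the t-vertex
    set c := (anchor H v0 v1 p).1 with hc
    set d := (anchor H v0 v1 p).2 with hd
    have hcd : H.Adj c d := anchor_adj H v0 v1 h01 p
    by_cases hxc : (Sum.inl c : WT m0) ≠ x
    · have s1 : ((GstarW G H f0 v0 v1).induce {u | u ≠ x}).Adj ⟨Sum.inr (Sum.inl p), h⟩ ⟨Sum.inl c, hxc⟩ := by
        show c = (anchor H v0 v1 p).1
        rfl
      exact s1.reachable.trans (hRO c hxc)
    · have hxc' : (Sum.inl c : WT m0) = x := not_not.mp hxc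
      have hxd : (Sum.inl d : WT m0) ≠ x := by
        rw [← hxc']
        intro hh
        exact hcd.ne (Sum.inl_injective hh).symm
      have hxt : (Sum.inr (Sum.inr p) : WT m0) ≠ x := by rw [← hxc']; simp
      have s1 : ((GstarW G H f0 v0 v1).induce {u | u ≠ x}).Adj ⟨Sum.inr (Sum.inl p), h⟩ ⟨Sum.inr (Sum.inr p), hxt⟩ := by
        show p = p
        rfl
      have s2 : ((GstarW G H f0 v0 v1).induce {u | u ≠ x}).Adj ⟨Sum.inr (Sum.inr p), hxt⟩ ⟨Sum.inl d, hxd⟩ := by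
        show d = (anchor H v0 v1 p).2
        rfl
      exact (s1.reachable.trans s2.reachable).trans (hRO d hxd)
  · -- t-vertex
    set c := (anchor H v0 v1 p).1 with hc
    set d := (anchor H v0 v1 p).2 with hd
    have hcd : H.Adj c d := anchor_adj H v0 v1 h01 p
    by_cases hxd : (Sum.inl d : WT m0) ≠ x
    · have s1 : ((GstarW G H f0 v0 v1).induce {u | u ≠ x}).Adj ⟨Sum.inr (Sum.inr p), h⟩ ⟨Sum.inl d, hxd⟩ := by
        show d = (anchor H v0 v1 p).2
        rfl
      exact s1.reachable.trans (hRO d hxd)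
    · have hxd' : (Sum.inl d : WT m0) = x := not_not.mp hxd
      have hxc : (Sum.inl c : WT m0) ≠ x := by
        rw [← hxd']
        intro hh
        exact hcd.ne (Sum.inl_injective hh)
      have hxs : (Sum.inr (Sum.inl p) : WT m0) ≠ x := by rw [← hxd']; simp
      have s1 : ((GstarW G H f0 v0 v1).induce {u | u ≠ x}).Adj ⟨Sum.inr (Sum.inr p), h⟩ ⟨Sum.inr (Sum.inl p), hxs⟩ := by
        show p = p
        rfl
      have s2 : ((GstarW G H f0 v0 v1).induce {u | u ≠ x}).Adj ⟨Sum.inr (Sum.inl p), hxs⟩ ⟨Sum.inl c, hxc⟩ := by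
        show c = (anchor H v0 v1 p).1
        rfl
      exact (s1.reachable.trans s2.reachable).trans (hRO c hxc)

lemma del_conn (hne : v0 ≠ v1) (h01 : H.Adj v0 v1) (hn : 2 ≤ n)
    (hv0 : eH ⟨0, by omega⟩ = v0) (hv1 : eH ⟨1, by omega⟩ = v1)
    (hstep : ∀ j : Fin n, 2 ≤ (j : ℕ) →
      ∃ a b : Fin n, (a : ℕ) < (j : ℕ) ∧ (b : ℕ) < (j : ℕ) ∧ H.Adj (eH a) (eH b) ∧
        ∀ i : Fin n, (i : ℕ) < (j : ℕ) → (H.Adj (eH i) (eH j) ↔ i = a ∨ i = b))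
    (x : WT m0) :
    ((GstarW G H f0 v0 v1).induce {u | u ≠ x}).Connected := by
  have key : ∀ u : {u : WT m0 | u ≠ x},
      ((GstarW G H f0 v0 v1).induce {u | u ≠ x}).Reachable u (target v0 v1 hne x) := by
    rintro ⟨(w | z), hu⟩
    · exact reach_old' G H f0 v0 v1 eH hne h01 hn hv0 hv1 hstep x w hu
    · exact reach_new G H f0 v0 v1 eH hne h01 hn hv0 hv1 hstep x z hu
  haveI : Nonempty {u : WT m0 | u ≠ x} := ⟨target v0 v1 hne x⟩
  exact SimpleGraph.Connected.mk (fun u v => (key u).trans (key v).symm)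

lemma gs_conn (hne : v0 ≠ v1) (h01 : H.Adj v0 v1) (hn : 2 ≤ n)
    (hv0 : eH ⟨0, by omega⟩ = v0) (hv1 : eH ⟨1, by omega⟩ = v1)
    (hstep : ∀ j : Fin n, 2 ≤ (j : ℕ) →
      ∃ a b : Fin n, (a : ℕ) < (j : ℕ) ∧ (b : ℕ) < (j : ℕ) ∧ H.Adj (eH a) (eH b) ∧
        ∀ i : Fin n, (i : ℕ) < (j : ℕ) → (H.Adj (eH i) (eH j) ↔ i = a ∨ i = b)) :
    (GstarW G H f0 v0 v1).Connected := by
  set x0 : WT m0 := Sum.inr (Sum.inl (v0, v0)) with hx0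
  have hdel := del_conn G H f0 v0 v1 eH hne h01 hn hv0 hv1 hstep x0
  have hy0 : (Sum.inr (Sum.inr (v0, v0)) : WT m0) ≠ x0 := by simp [hx0]
  have key : ∀ u : WT m0, (GstarW G H f0 v0 v1).Reachable u (Sum.inr (Sum.inr (v0, v0))) := by
    intro u
    by_cases hu : u = x0
    · subst hu
      have : (GstarW G H f0 v0 v1).Adj x0 (Sum.inr (Sum.inr (v0, v0))) := by
        show (v0, v0) = (v0, v0)
        rfl
      exact this.reachable
    · exact (hdel.preconnected ⟨u, hu⟩ ⟨Sum.inr (Sum.inr (v0, v0)), hy0⟩).map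
        (⟨Subtype.val, fun {a b} h => h⟩ :
          (GstarW G H f0 v0 v1).induce {u | u ≠ x0} →g GstarW G H f0 v0 v1)
  haveI : Nonempty (WT m0) := ⟨x0⟩
  exact SimpleGraph.Connected.mk (fun u v => (key u).trans (key v).symm)

end Reach

def h2Adj : WT m0 → WT m0 → Prop
  | .inl a, .inl b => H.Adj a b
  | .inl a, .inr (.inl p) => a = (anchor H v0 v1 p).1 ∨ a = (anchor H v0 v1 p).2
  | .inr (.inl p), .inl a => a = (anchor H v0 v1 p).1 ∨ a = (anchor H v0 v1 p).2
  | .inl a, .inr (.inr p) => a = (anchor H v0 v1 p).2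
  | .inr (.inr p), .inl a => a = (anchor H v0 v1 p).2
  | .inr (.inl p), .inr (.inr q) => p = q
  | .inr (.inr p), .inr (.inl q) => p = q
  | .inr (.inl _), .inr (.inl _) => False
  | .inr (.inr _), .inr (.inr _) => False

noncomputable def H2W : SimpleGraph (WT m0) where
  Adj := h2Adj H v0 v1
  symm := by
    constructor
    rintro (a | p | p) (b | q | q) h
    · exact h.symm
    all_goals first
      | exact h
      | exact h.symm
  loopless := by
    constructor
    rintro (a | p | p) h
    · exact H.loopless.irrefl a h
    · exact h
    · exact h

lemma gs_le_h2 (hhom : ∀ u v, G.Adj u v → H.Adj (f0 u) (f0 v)) :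
    ∀ x y, (GstarW G H f0 v0 v1).Adj x y → (H2W H v0 v1).Adj x y := by
  rintro (a | p | p) (b | q | q) h
  · obtain ⟨⟨u, v, hG, hu, hv⟩, _⟩ := h
    subst hu hv; exact hhom u v hG
  · exact Or.inl h
  · exact h
  · exact Or.inl h
  · exact h
  · exact h
  · exact h
  · exact h
  · exact h

section TwoTree
variable {n : ℕ}

noncomputable def EW (eH : Fin n ≃ Fin m0) : Fin (n + (m0 * m0 + m0 * m0)) ≃ WT m0 :=
  finSumFinEquiv.symm.trans (Equiv.sumCongr eH
    (finSumFinEquiv.symm.trans (Equiv.sumCongr finProdFinEquiv.symm finProdFinEquiv.symm)))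

variable (eH : Fin n ≃ Fin m0)

lemma EW_symm_inl (w : Fin m0) :
    (((EW (m0 := m0) eH).symm (Sum.inl w) : Fin (n + (m0 * m0 + m0 * m0))) : ℕ)
      = ((eH.symm w : Fin n) : ℕ) := by
  simp [EW]

lemma EW_symm_s (p : Fin m0 × Fin m0) :
    (((EW (m0 := m0) eH).symm (Sum.inr (Sum.inl p)) : Fin (n + (m0 * m0 + m0 * m0))) : ℕ)
      = n + ((finProdFinEquiv p : Fin (m0 * m0)) : ℕ) := by
  simp [EW]

lemma EW_symm_t (p : Fin m0 × Fin m0) :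
    (((EW (m0 := m0) eH).symm (Sum.inr (Sum.inr p)) : Fin (n + (m0 * m0 + m0 * m0))) : ℕ)
      = n + (m0 * m0 + ((finProdFinEquiv p : Fin (m0 * m0)) : ℕ)) := by
  simp [EW]; omega

lemma h2_isTwoTree (hn : 2 ≤ n)
    (hv0 : eH ⟨0, by omega⟩ = v0) (hv1 : eH ⟨1, by omega⟩ = v1) (h01 : H.Adj v0 v1)
    (hstep : ∀ j : Fin n, 2 ≤ (j : ℕ) →
      ∃ a b : Fin n, (a : ℕ) < (j : ℕ) ∧ (b : ℕ) < (j : ℕ) ∧ H.Adj (eH a) (eH b) ∧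
        ∀ i : Fin n, (i : ℕ) < (j : ℕ) → (H.Adj (eH i) (eH j) ↔ i = a ∨ i = b)) :
    IsTwoTree (H2W H v0 v1) := by
  classical
  refine ⟨n + (m0 * m0 + m0 * m0), EW (m0 := m0) eH, by omega, ?_, ?_⟩
  · -- the base edge
    intro i j hi hj
    have hsv0 : ((eH.symm v0 : Fin n) : ℕ) = 0 := by rw [← hv0, Equiv.symm_apply_apply]
    have hsv1 : ((eH.symm v1 : Fin n) : ℕ) = 1 := by rw [← hv1, Equiv.symm_apply_apply]
    have h1 : (EW (m0 := m0) eH).symm (Sum.inl v0) = i := Fin.ext (by rw [EW_symm_inl, hsv0, hi])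
    have h2 : (EW (m0 := m0) eH).symm (Sum.inl v1) = j := Fin.ext (by rw [EW_symm_inl, hsv1, hj])
    have hEi : EW (m0 := m0) eH i = Sum.inl v0 := by rw [← h1, Equiv.apply_symm_apply]
    have hEj : EW (m0 := m0) eH j = Sum.inl v1 := by rw [← h2, Equiv.apply_symm_apply]
    rw [hEi, hEj]
    exact h01
  · -- the construction step
    intro j hj
    rcases hEj : EW (m0 := m0) eH j with w | p | p
    · -- an original vertex of H
      have hj' : j = (EW (m0 := m0) eH).symm (Sum.inl w) := by
        rw [← hEj, Equiv.symm_apply_apply]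
      have hval : (j : ℕ) = ((eH.symm w : Fin n) : ℕ) := by rw [hj', EW_symm_inl]
      have hj2 : 2 ≤ ((eH.symm w : Fin n) : ℕ) := hval ▸ hj
      obtain ⟨a', b', ha', hb', hab, hiff⟩ := hstep (eH.symm w) hj2
      refine ⟨(EW (m0 := m0) eH).symm (Sum.inl (eH a')),
        (EW (m0 := m0) eH).symm (Sum.inl (eH b')), ?_, ?_, ?_, ?_⟩
      · rw [EW_symm_inl, Equiv.symm_apply_apply, hval]; exact ha'
      · rw [EW_symm_inl, Equiv.symm_apply_apply, hval]; exact hb'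
      · rw [Equiv.apply_symm_apply, Equiv.apply_symm_apply]; exact hab
      · intro i hi
        rcases hEi : EW (m0 := m0) eH i with w'' | p'' | p''
        · have hi' : i = (EW (m0 := m0) eH).symm (Sum.inl w'') := by
            rw [← hEi, Equiv.symm_apply_apply]
          have hival : (i : ℕ) = ((eH.symm w'' : Fin n) : ℕ) := by rw [hi', EW_symm_inl]
          have hlt : ((eH.symm w'' : Fin n) : ℕ) < ((eH.symm w : Fin n) : ℕ) := by omega
          have key := hiff (eH.symm w'') hlt
          rw [Equiv.apply_symm_apply, Equiv.apply_symm_apply] at key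
          have conv : ∀ c' : Fin n,
              (i = (EW (m0 := m0) eH).symm (Sum.inl (eH c')) ↔ eH.symm w'' = c') := by
            intro c'
            rw [hi']
            constructor
            · intro hh
              have := (EW (m0 := m0) eH).symm.injective hh
              simp only [Sum.inl.injEq] at this
              rw [this, Equiv.symm_apply_apply]
            · intro hh
              rw [(Equiv.symm_apply_eq eH).mp hh]
          show H.Adj w'' w ↔ _
          rw [key]
          exact or_congr (conv a').symm (conv b').symm
        · -- impossible : an s-vertex has index ≥ n
          exfalso
          have hi' : i = (EW (m0 := m0) eH).symm (Sum.inr (Sum.inl p'')) := by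
            rw [← hEi, Equiv.symm_apply_apply]
          have : (i : ℕ) = n + ((finProdFinEquiv p'' : Fin (m0 * m0)) : ℕ) := by
            rw [hi', EW_symm_s]
          have := (eH.symm w).isLt
          omega
        · exfalso
          have hi' : i = (EW (m0 := m0) eH).symm (Sum.inr (Sum.inr p'')) := by
            rw [← hEi, Equiv.symm_apply_apply]
          have : (i : ℕ) = n + (m0 * m0 + ((finProdFinEquiv p'' : Fin (m0 * m0)) : ℕ)) := by
            rw [hi', EW_symm_t]
          have := (eH.symm w).isLt
          omega
    · -- an s-vertex
      have hj' : j = (EW (m0 := m0) eH).symm (Sum.inr (Sum.inl p)) := by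
        rw [← hEj, Equiv.symm_apply_apply]
      have hval : (j : ℕ) = n + ((finProdFinEquiv p : Fin (m0 * m0)) : ℕ) := by
        rw [hj', EW_symm_s]
      refine ⟨(EW (m0 := m0) eH).symm (Sum.inl (anchor H v0 v1 p).1),
        (EW (m0 := m0) eH).symm (Sum.inl (anchor H v0 v1 p).2), ?_, ?_, ?_, ?_⟩
      · rw [EW_symm_inl]
        have := (eH.symm (anchor H v0 v1 p).1).isLt
        omega
      · rw [EW_symm_inl]
        have := (eH.symm (anchor H v0 v1 p).2).isLt
        omega
      · rw [Equiv.apply_symm_apply, Equiv.apply_symm_apply]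
        exact anchor_adj H v0 v1 h01 p
      · intro i hi
        have conv : ∀ z : WT m0,
            (i = (EW (m0 := m0) eH).symm z ↔ EW (m0 := m0) eH i = z) := by
          intro z
          rw [Equiv.eq_symm_apply]
        rcases hEi : EW (m0 := m0) eH i with w'' | p'' | p''
        · show (w'' = (anchor H v0 v1 p).1 ∨ w'' = (anchor H v0 v1 p).2) ↔ _
          refine or_congr ?_ ?_ <;>
            (rw [conv, hEi]; simp only [Sum.inl.injEq])
        · show False ↔ _
          simp only [false_iff]
          rintro (hh | hh) <;>
            (rw [conv, hEi] at hh; simp at hh)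
        · exfalso
          have hi' : i = (EW (m0 := m0) eH).symm (Sum.inr (Sum.inr p'')) := by
            rw [← hEi, Equiv.symm_apply_apply]
          have : (i : ℕ) = n + (m0 * m0 + ((finProdFinEquiv p'' : Fin (m0 * m0)) : ℕ)) := by
            rw [hi', EW_symm_t]
          have := (finProdFinEquiv p : Fin (m0 * m0)).isLt
          omega
    · -- a t-vertex
      have hj' : j = (EW (m0 := m0) eH).symm (Sum.inr (Sum.inr p)) := by
        rw [← hEj, Equiv.symm_apply_apply]
      have hval : (j : ℕ) = n + (m0 * m0 + ((finProdFinEquiv p : Fin (m0 * m0)) : ℕ)) := by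
        rw [hj', EW_symm_t]
      refine ⟨(EW (m0 := m0) eH).symm (Sum.inr (Sum.inl p)),
        (EW (m0 := m0) eH).symm (Sum.inl (anchor H v0 v1 p).2), ?_, ?_, ?_, ?_⟩
      · rw [EW_symm_s]
        omega
      · rw [EW_symm_inl]
        have := (eH.symm (anchor H v0 v1 p).2).isLt
        omega
      · rw [Equiv.apply_symm_apply, Equiv.apply_symm_apply]
        exact Or.inr rfl
      · intro i hi
        have conv : ∀ z : WT m0,
            (i = (EW (m0 := m0) eH).symm z ↔ EW (m0 := m0) eH i = z) := by
          intro z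
          rw [Equiv.eq_symm_apply]
        rcases hEi : EW (m0 := m0) eH i with w'' | p'' | p''
        · show (w'' = (anchor H v0 v1 p).2) ↔ _
          constructor
          · intro hh
            exact Or.inr (by rw [conv, hEi, hh])
          · rintro (hh | hh)
            · rw [conv, hEi] at hh; simp at hh
            · rw [conv, hEi] at hh
              simp only [Sum.inl.injEq] at hh
              exact hh
        · show p'' = p ↔ _
          constructor
          · intro hh
            exact Or.inl (by rw [conv, hEi, hh])
          · rintro (hh | hh)
            · rw [conv, hEi] at hh
              simp only [Sum.inr.injEq, Sum.inl.injEq] at hh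
              exact hh
            · rw [conv, hEi] at hh; simp at hh
        · show False ↔ _
          simp only [false_iff]
          rintro (hh | hh) <;>
            (rw [conv, hEi] at hh; simp at hh)

end TwoTree

instance : DecidableRel K113.Adj := fun u v =>
  inferInstanceAs (Decidable (u ≠ v ∧ ((u : ℕ) < 2 ∨ (v : ℕ) < 2)))

lemma gs_no_new_triangle (h01 : H.Adj v0 v1) :
    ∀ (z : (Fin m0 × Fin m0) ⊕ (Fin m0 × Fin m0)) (y1 y2 : WT m0),
      (GstarW G H f0 v0 v1).Adj (Sum.inr z) y1 → (GstarW G H f0 v0 v1).Adj (Sum.inr z) y2 →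
      (GstarW G H f0 v0 v1).Adj y1 y2 → False := by
  rintro (p | p) (a | q | q) (b | r | r) h1 h2 h12
  all_goals first
    | exact h1
    | exact h2
    | exact h12
    | skip
  · -- z = s p, y1 = inl a, y2 = inl b : then a = b = anchor.1, contradicting a ≠ b
    have e1 : a = (anchor H v0 v1 p).1 := h1
    have e2 : b = (anchor H v0 v1 p).1 := h2
    exact h12.2 (e1.trans e2.symm)
  · -- z = s p, y1 = inl a, y2 = t r : a = anchor.1, p = r, a = (anchor r).2
    have e1 : a = (anchor H v0 v1 p).1 := h1
    have e2 : p = r := h2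
    have e3 : a = (anchor H v0 v1 r).2 := h12
    subst e2
    exact (anchor_adj H v0 v1 h01 p).ne (e1.symm.trans e3)
  · -- z = s p, y1 = t q, y2 = inl b : p = q, b = anchor.1, b = (anchor q).2
    have e1 : p = q := h1
    have e2 : b = (anchor H v0 v1 p).1 := h2
    have e3 : b = (anchor H v0 v1 q).2 := h12
    subst e1
    exact (anchor_adj H v0 v1 h01 p).ne (e2.symm.trans e3)
  · -- z = t p, y1 = inl a, y2 = inl b
    have e1 : a = (anchor H v0 v1 p).2 := h1
    have e2 : b = (anchor H v0 v1 p).2 := h2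
    exact h12.2 (e1.trans e2.symm)
  · -- z = t p, y1 = inl a, y2 = s r : a = anchor.2, p = r, a = (anchor r).1
    have e1 : a = (anchor H v0 v1 p).2 := h1
    have e2 : p = r := h2
    have e3 : a = (anchor H v0 v1 r).1 := h12
    subst e2
    exact (anchor_adj H v0 v1 h01 p).ne (e3.symm.trans e1)
  · -- z = t p, y1 = s q, y2 = inl b
    have e1 : p = q := h1
    have e2 : b = (anchor H v0 v1 p).2 := h2
    have e3 : b = (anchor H v0 v1 q).1 := h12
    subst e1
    exact (anchor_adj H v0 v1 h01 p).ne (e3.symm.trans e2)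

lemma gs_k113free (hinj0 : Function.Injective f0) (h01 : H.Adj v0 v1)
    (hfree : K113Free G) : K113Free (GstarW G H f0 v0 v1) := by
  rintro ⟨φ, hφinj, hφhom⟩
  have tri := gs_no_new_triangle G H f0 v0 v1 h01
  have hK5 : ∀ k : Fin 5, ∃ u v : Fin 5, K113.Adj k u ∧ K113.Adj k v ∧ K113.Adj u v := by
    decide
  have hall : ∀ k : Fin 5, ∃ w : Fin m0, φ k = Sum.inl w := by
    intro k
    rcases hφk : φ k with w | z
    · exact ⟨w, rfl⟩
    · exfalso
      obtain ⟨u, v, hku, hkv, huv⟩ := hK5 k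
      have a1 := hφhom k u hku
      have a2 := hφhom k v hkv
      have a3 := hφhom u v huv
      rw [hφk] at a1 a2
      exact tri z (φ u) (φ v) a1 a2 a3
  choose w hw using hall
  have hadj01 : K113.Adj 0 1 := by decide
  have hrange : ∀ k : Fin 5, ∃ a : V, f0 a = w k := by
    intro k
    by_cases hk0 : k = 0
    · have := hφhom 0 1 hadj01
      rw [hw 0, hw 1] at this
      obtain ⟨⟨a, b, hG, ha, hb⟩, hne⟩ := this
      exact ⟨a, by rw [ha, hk0]⟩
    · have hadj : K113.Adj 0 k := ⟨fun h => hk0 h.symm, Or.inl (by norm_num)⟩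
      have := hφhom 0 k hadj
      rw [hw 0, hw k] at this
      obtain ⟨⟨a, b, hG, ha, hb⟩, hne⟩ := this
      exact ⟨b, hb⟩
  choose ψ hψ using hrange
  apply hfree
  refine ⟨ψ, ?_, ?_⟩
  · intro k l hkl
    have : w k = w l := by rw [← hψ k, ← hψ l, hkl]
    apply hφinj
    rw [hw k, hw l, this]
  · intro u v huv
    have := hφhom u v huv
    rw [hw u, hw v] at this
    obtain ⟨⟨a, b, hG, ha, hb⟩, hne⟩ := this
    have ha' : a = ψ u := hinj0 (by rw [ha, hψ u])
    have hb' : b = ψ v := hinj0 (by rw [hb, hψ v])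
    rw [← ha', ← hb']
    exact hG

lemma isTwoTree_comap {α β : Type} (e : α ≃ β) (Γ : SimpleGraph α) (h : IsTwoTree Γ) :
    IsTwoTree (SimpleGraph.comap e.symm Γ) := by
  obtain ⟨n, en, hn, hbase, hstep⟩ := h
  refine ⟨n, en.trans e, hn, ?_, ?_⟩
  · intro i j hi hj
    show Γ.Adj (e.symm (e (en i))) (e.symm (e (en j)))
    rw [Equiv.symm_apply_apply, Equiv.symm_apply_apply]
    exact hbase i j hi hj
  · intro j hj
    obtain ⟨a, b, ha, hb, hab, hiff⟩ := hstep j hj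
    refine ⟨a, b, ha, hb, ?_, ?_⟩
    · show Γ.Adj (e.symm (e (en a))) (e.symm (e (en b)))
      rw [Equiv.symm_apply_apply, Equiv.symm_apply_apply]
      exact hab
    · intro i hi
      have : (SimpleGraph.comap e.symm Γ).Adj ((en.trans e) i) ((en.trans e) j)
          ↔ Γ.Adj (en i) (en j) := by
        show Γ.Adj (e.symm (e (en i))) (e.symm (e (en j))) ↔ _
        rw [Equiv.symm_apply_apply, Equiv.symm_apply_apply]
      rw [this]
      exact hiff i hi

end Aux

theorem exists_seriesParallel_supergraph' {V : Type} [Fintype V]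
    (G : SimpleGraph V) (hconn : G.Connected) (hpt : IsPartialTwoTree G)
    (hfree : K113Free G) :
    ∃ (m : ℕ) (Gstar : SimpleGraph (Fin m)) (f : V → Fin m),
      Function.Injective f ∧
      (∀ u v : V, G.Adj u v ↔ Gstar.Adj (f u) (f v)) ∧
      IsSeriesParallel Gstar ∧ K113Free Gstar ∧
      (HasSCR Gstar → HasSCR G) := by
  classical
  obtain ⟨m0, H, ⟨n, eH, hn, hbase, hstep⟩, f0, hinj0, hhom⟩ := hpt
  set v0 : Fin m0 := eH ⟨0, by omega⟩ with hv0def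
  set v1 : Fin m0 := eH ⟨1, by omega⟩ with hv1def
  have h01 : H.Adj v0 v1 := hbase _ _ rfl rfl
  have hne : v0 ≠ v1 := h01.ne
  set M := Fintype.card (WT m0) with hM
  set eqF : WT m0 ≃ Fin M := Fintype.equivFin (WT m0) with heqF
  set GsW := GstarW G H f0 v0 v1 with hGsW
  set GstarF : SimpleGraph (Fin M) := SimpleGraph.comap eqF.symm GsW with hGstarF
  set f : V → Fin M := fun v => eqF (Sum.inl (f0 v)) with hf
  have hadjF : ∀ x y : WT m0, GstarF.Adj (eqF x) (eqF y) ↔ GsW.Adj x y := by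
    intro x y
    show GsW.Adj (eqF.symm (eqF x)) (eqF.symm (eqF y)) ↔ _
    rw [Equiv.symm_apply_apply, Equiv.symm_apply_apply]
  have hfinj : Function.Injective f := by
    intro u v huv
    exact hinj0 (Sum.inl_injective (eqF.injective huv))
  have hiff : ∀ u v : V, G.Adj u v ↔ GstarF.Adj (f u) (f v) := by
    intro u v
    rw [hf]
    simp only []
    rw [hadjF]
    constructor
    · intro h
      exact ⟨⟨u, v, h, rfl, rfl⟩, fun hh => h.ne (hinj0 hh)⟩
    · rintro ⟨⟨a, b, hG, ha, hb⟩, hne'⟩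
      rwa [hinj0 ha, hinj0 hb] at hG
  refine ⟨M, GstarF, f, hfinj, hiff, ⟨⟨?_, ?_, ?_⟩, ?_⟩, ?_, ?_⟩
  · -- at least two vertices
    have : Nontrivial (WT m0) :=
      ⟨Sum.inl v0, Sum.inl v1, fun hh => hne (Sum.inl_injective hh)⟩
    rw [Fintype.card_fin]
    exact Fintype.one_lt_card_iff_nontrivial.mpr this
  · -- connected
    refine (gs_conn G H f0 v0 v1 eH hne h01 hn rfl rfl hstep).map
      (⟨eqF, ?_⟩ : GsW →g GstarF) eqF.surjective
    intro a b hab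
    exact (hadjF a b).mpr hab
  · -- 2-connected : deleting any vertex keeps it connected
    intro x
    have hdel := del_conn G H f0 v0 v1 eH hne h01 hn rfl rfl hstep (eqF.symm x)
    refine hdel.map
      ⟨fun u => ⟨eqF u.1, fun hh => u.2 ((Equiv.eq_symm_apply eqF).mpr hh)⟩, ?_⟩ ?_
    · rintro ⟨a, ha⟩ ⟨b, hb⟩ hab
      exact (hadjF a b).mpr hab
    · rintro ⟨y, hy⟩
      exact ⟨⟨eqF.symm y, fun hh => hy (eqF.symm.injective hh)⟩,
        Subtype.ext (eqF.apply_symm_apply y)⟩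
  · -- partial 2-tree
    refine ⟨M, SimpleGraph.comap eqF.symm (H2W H v0 v1), ?_, id, fun a b h => h, ?_⟩
    · exact isTwoTree_comap eqF (H2W H v0 v1)
        (h2_isTwoTree H v0 v1 eH hn rfl rfl h01 hstep)
    · intro u v huv
      exact gs_le_h2 G H f0 v0 v1 hhom _ _ huv
  · -- K113-free
    rintro ⟨φ, hφinj, hφhom⟩
    exact gs_k113free G H f0 v0 v1 hinj0 h01 hfree
      ⟨fun k => eqF.symm (φ k), fun a b hab => hφinj (eqF.symm.injective hab),
        fun u v huv => hφhom u v huv⟩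
  · -- SCR transfer
    rintro ⟨Sq, h1, h2, h3⟩
    refine ⟨fun v => Sq (f v), ?_, ?_, ?_⟩
    · intro u _ v _ huv
      exact h1 (f u) trivial (f v) trivial (fun hh => huv (hfinj hh))
    · intro u _ v _ huv
      exact h2 (f u) trivial (f v) trivial ((hiff u v).mp huv)
    · intro u _ v _ huv hnadj
      exact h3 (f u) trivial (f v) trivial (fun hh => huv (hfinj hh))
        (fun hh => hnadj ((hiff u v).mpr hh))

/-- Lemma 1: every finite connected `K_{1,1,3}`-free partial 2-tree
`G` is an induced subgraph of some finite `K_{1,1,3}`-free series-parallel graph `G*`;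
consequently, if `G*` admits a proper square-contact representation then so does `G`. -/
theorem exists_seriesParallel_supergraph {V : Type} [Fintype V]
    (G : SimpleGraph V) (hconn : G.Connected) (hpt : IsPartialTwoTree G)
    (hfree : K113Free G) :
    ∃ (m : ℕ) (Gstar : SimpleGraph (Fin m)) (f : V → Fin m),
      Function.Injective f ∧
      (∀ u v : V, G.Adj u v ↔ Gstar.Adj (f u) (f v)) ∧
      IsSeriesParallel Gstar ∧ K113Free Gstar ∧
      (HasSCR Gstar → HasSCR G) :=
  exists_seriesParallel_supergraph' G hconn hpt hfree
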